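/- Let A ∈ ℝ^{n×n}, B ∈ ℝ^{n×m}, and let (K_t)_{t≥1} ⊂ ℝ^{m×n} be a (κ,γ)-sequentially strongly stable sequence for (A,B), witnessed by invertible matrices H_t and matrices L_t. Let W ∈ ℝ^{n×n}, and let (X_t)_{t≥1} and (X^s_t)_{t≥1} be sequences of n×n matrices satisfying X_{t+1} = (A+BK_t) X_t (A+BK_t)ᵀ + W and X^s_t = (A+BK_t) X^s_t (A+BK_t)ᵀ + W for all t ≥ 1. Then for every t ≥ 1: ‖X_t − X^s_t‖ ≤ exp(−(t−1)γ) κ² ‖X_1 − X^s_1‖ + κ² Σ_{i=0}^{t−2} (1 − γ/2)^{2i} ‖X^s_{t−i} − X^s_{t−1−i}‖. -/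

import Mathlib

open Matrix
open scoped Matrix.Norms.L2Operator

lemma aux_rec (g d : ℕ → ℝ) (r c : ℝ)
    (hrec : ∀ t, 1 ≤ t → g (t + 1) ≤ r ^ 2 * g t + c * d t) :
    ∀ t, 1 ≤ t → g t ≤ r ^ (2 * (t - 1)) * g 1 +
      c * ∑ i ∈ Finset.range (t - 1), r ^ (2 * i) * d (t - 1 - i) := by
  intro t
  induction t with
  | zero => omega
  | succ t ih =>
    intro _
    rcases Nat.eq_zero_or_pos t with h0 | ht
    · subst h0; simp
    · obtain ⟨s, rfl⟩ : ∃ s, t = s + 1 := ⟨t - 1, by omega⟩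
      have hbound := ih ht
      simp only [Nat.add_sub_cancel] at hbound ⊢
      have hsum : ∑ i ∈ Finset.range (s + 1), r ^ (2 * i) * d (s + 1 - i) =
          (∑ i ∈ Finset.range s, r ^ (2 * (i + 1)) * d (s - i)) + d (s + 1) := by
        rw [Finset.sum_range_succ']
        simp [Nat.succ_sub_succ]
      have hS : (∑ i ∈ Finset.range s, r ^ (2 * (i + 1)) * d (s - i))
          = r ^ 2 * ∑ i ∈ Finset.range s, r ^ (2 * i) * d (s - i) := by
        rw [Finset.mul_sum]
        refine Finset.sum_congr rfl fun i _ => ?_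
        rw [show 2 * (i + 1) = 2 + 2 * i by ring, pow_add]
        ring
      have hpw : r ^ (2 * (s + 1)) = r ^ 2 * r ^ (2 * s) := by
        rw [← pow_add]; congr 1; ring
      have hmul : r ^ 2 * g (s + 1) ≤ r ^ 2 * (r ^ (2 * s) * g 1 +
          c * ∑ i ∈ Finset.range s, r ^ (2 * i) * d (s - i)) :=
        mul_le_mul_of_nonneg_left hbound (by positivity)
      have hstep := hrec (s + 1) (by omega)
      calc g (s + 1 + 1) ≤ r ^ 2 * g (s + 1) + c * d (s + 1) := hstep
        _ ≤ r ^ 2 * (r ^ (2 * s) * g 1 +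
              c * ∑ i ∈ Finset.range s, r ^ (2 * i) * d (s - i)) + c * d (s + 1) := by
            linarith
        _ = r ^ (2 * (s + 1)) * g 1 +
              c * ∑ i ∈ Finset.range (s + 1), r ^ (2 * i) * d (s + 1 - i) := by
            rw [hsum, hS, hpw]; ring

theorem covariance_tracking_of_sequentially_strongly_stable
    {n m : ℕ}
    (A : Matrix (Fin n) (Fin n) ℝ) (B : Matrix (Fin n) (Fin m) ℝ)
    (K : ℕ → Matrix (Fin m) (Fin n) ℝ)
    (H L : ℕ → Matrix (Fin n) (Fin n) ℝ)
    (κ γ α' β' : ℝ)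
    (hκ : 0 < κ) (hγ0 : 0 < γ) (hγ1 : γ ≤ 1)
    (hα' : 0 < α') (hβ' : 0 < β') (hκdef : κ = β' / α')
    (hHunit : ∀ t, 1 ≤ t → IsUnit (H t).det)
    (hfact : ∀ t, 1 ≤ t → A + B * K t = H t * L t * (H t)⁻¹)
    (hL : ∀ t, 1 ≤ t → ‖L t‖ ≤ 1 - γ)
    (hK : ∀ t, 1 ≤ t → ‖K t‖ ≤ κ)
    (hH : ∀ t, 1 ≤ t → ‖H t‖ ≤ β')
    (hHinv : ∀ t, 1 ≤ t → ‖(H t)⁻¹‖ ≤ 1 / α')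
    (hHH : ∀ t, 1 ≤ t → ‖(H (t + 1))⁻¹ * H t‖ ≤ 1 + γ / 2)
    (W : Matrix (Fin n) (Fin n) ℝ)
    (X Xs : ℕ → Matrix (Fin n) (Fin n) ℝ)
    (hX : ∀ t, 1 ≤ t → X (t + 1) = (A + B * K t) * X t * (A + B * K t)ᵀ + W)
    (hXs : ∀ t, 1 ≤ t → Xs t = (A + B * K t) * Xs t * (A + B * K t)ᵀ + W) :
    ∀ t, 1 ≤ t → ‖X t - Xs t‖ ≤
      Real.exp (-((t : ℝ) - 1) * γ) * κ ^ 2 * ‖X 1 - Xs 1‖ +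
      κ ^ 2 * ∑ i ∈ Finset.range (t - 1),
        (1 - γ / 2) ^ (2 * i) * ‖Xs (t - i) - Xs (t - 1 - i)‖ := by
  -- notation
  set E : ℕ → Matrix (Fin n) (Fin n) ℝ := fun t => X t - Xs t with hEdef
  set G : ℕ → Matrix (Fin n) (Fin n) ℝ :=
    fun t => (H t)⁻¹ * E t * ((H t)⁻¹)ᵀ with hGdef
  have hnormT : ∀ (M : Matrix (Fin n) (Fin n) ℝ), ‖Mᵀ‖ = ‖M‖ := fun M => by
    rw [← Matrix.conjTranspose_eq_transpose_of_trivial, Matrix.l2_opNorm_conjTranspose]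
  have tri : ∀ (P Q R : Matrix (Fin n) (Fin n) ℝ), ‖P * Q * R‖ ≤ ‖P‖ * ‖Q‖ * ‖R‖ := by
    intro P Q R
    calc ‖P * Q * R‖ ≤ ‖P * Q‖ * ‖R‖ := Matrix.l2_opNorm_mul _ _
      _ ≤ ‖P‖ * ‖Q‖ * ‖R‖ :=
        mul_le_mul_of_nonneg_right (Matrix.l2_opNorm_mul _ _) (norm_nonneg _)
  have hHi : ∀ t, 1 ≤ t → H t * (H t)⁻¹ = 1 := fun t ht =>
    Matrix.mul_nonsing_inv _ (hHunit t ht)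
  have hHi' : ∀ t, 1 ≤ t → (H t)⁻¹ * H t = 1 := fun t ht =>
    Matrix.nonsing_inv_mul _ (hHunit t ht)
  -- E t = H t * G t * (H t)ᵀ
  have hEG : ∀ t, 1 ≤ t → E t = H t * G t * (H t)ᵀ := by
    intro t ht
    have c1 : ∀ Z : Matrix (Fin n) (Fin n) ℝ, H t * ((H t)⁻¹ * Z) = Z := fun Z => by
      rw [← Matrix.mul_assoc, hHi t ht, Matrix.one_mul]
    have c2 : ((H t)⁻¹)ᵀ * (H t)ᵀ = 1 := by
      rw [← Matrix.transpose_mul, hHi t ht, Matrix.transpose_one]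
    simp only [hGdef, Matrix.mul_assoc, c2, Matrix.mul_one, c1]
  -- recursion for E
  have hErec : ∀ t, 1 ≤ t → E (t + 1) =
      (A + B * K t) * E t * (A + B * K t)ᵀ + (Xs t - Xs (t + 1)) := by
    intro t ht
    have hW : Xs t - (A + B * K t) * Xs t * (A + B * K t)ᵀ = W := by
      nth_rewrite 1 [hXs t ht]; abel
    simp only [hEdef]
    rw [hX t ht, ← hW]
    noncomm_ring
  -- conjugation identity
  have hconj : ∀ t, 1 ≤ t →
      (H t * L t * (H t)⁻¹) * (H t * G t * (H t)ᵀ) * (H t * L t * (H t)⁻¹)ᵀ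
        = H t * (L t * G t * (L t)ᵀ) * (H t)ᵀ := by
    intro t ht
    have c1 : ∀ Z : Matrix (Fin n) (Fin n) ℝ, (H t)⁻¹ * (H t * Z) = Z := fun Z => by
      rw [← Matrix.mul_assoc, hHi' t ht, Matrix.one_mul]
    have c2 : ∀ Z : Matrix (Fin n) (Fin n) ℝ, (H t)ᵀ * (((H t)⁻¹)ᵀ * Z) = Z := fun Z => by
      rw [← Matrix.mul_assoc, ← Matrix.transpose_mul, hHi' t ht, Matrix.transpose_one,
        Matrix.one_mul]
    simp only [Matrix.transpose_mul, Matrix.mul_assoc, c1, c2]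
  -- recursion for G
  have hGrec : ∀ t, 1 ≤ t → G (t + 1) =
      ((H (t + 1))⁻¹ * H t) * (L t * G t * (L t)ᵀ) * ((H (t + 1))⁻¹ * H t)ᵀ
        + (H (t + 1))⁻¹ * (Xs t - Xs (t + 1)) * ((H (t + 1))⁻¹)ᵀ := by
    intro t ht
    have h1 : E (t + 1) = H t * (L t * G t * (L t)ᵀ) * (H t)ᵀ + (Xs t - Xs (t + 1)) := by
      rw [hErec t ht, hfact t ht, hEG t ht, hconj t ht]
    show (H (t + 1))⁻¹ * E (t + 1) * ((H (t + 1))⁻¹)ᵀ = _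
    rw [h1]
    simp only [Matrix.transpose_mul, Matrix.add_mul, Matrix.mul_add, Matrix.mul_assoc]
  -- norm recursion for G
  have hr0 : (0:ℝ) ≤ 1 - γ / 2 := by linarith
  have hGnorm : ∀ t, 1 ≤ t → ‖G (t + 1)‖ ≤
      (1 - γ / 2) ^ 2 * ‖G t‖ + (1 / α' ^ 2) * ‖Xs (t + 1) - Xs t‖ := by
    intro t ht
    have ht1 : (1:ℕ) ≤ t + 1 := by omega
    rw [hGrec t ht]
    have hP := hHH t ht
    have hLt := hL t ht
    have hHinv1 := hHinv (t + 1) ht1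
    set P := (H (t + 1))⁻¹ * H t with hPdef
    have n1 : ‖P * (L t * G t * (L t)ᵀ) * Pᵀ‖ ≤ ‖P‖ * ‖L t‖ * ‖G t‖ * ‖L t‖ * ‖P‖ := by
      have h1 := tri P (L t * G t * (L t)ᵀ) Pᵀ
      have h2 := tri (L t) (G t) (L t)ᵀ
      rw [hnormT] at h1 h2
      have hnn : (0:ℝ) ≤ ‖P‖ := norm_nonneg _
      calc ‖P * (L t * G t * (L t)ᵀ) * Pᵀ‖ ≤ ‖P‖ * ‖L t * G t * (L t)ᵀ‖ * ‖P‖ := h1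
        _ ≤ ‖P‖ * (‖L t‖ * ‖G t‖ * ‖L t‖) * ‖P‖ := by
            apply mul_le_mul_of_nonneg_right _ hnn
            exact mul_le_mul_of_nonneg_left h2 hnn
        _ = ‖P‖ * ‖L t‖ * ‖G t‖ * ‖L t‖ * ‖P‖ := by ring
    have n2 : ‖(H (t + 1))⁻¹ * (Xs t - Xs (t + 1)) * ((H (t + 1))⁻¹)ᵀ‖ ≤
        (1 / α') * ‖Xs t - Xs (t + 1)‖ * (1 / α') := by
      have h1 := tri (H (t + 1))⁻¹ (Xs t - Xs (t + 1)) ((H (t + 1))⁻¹)ᵀ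
      rw [hnormT] at h1
      have hd : (0:ℝ) ≤ ‖Xs t - Xs (t + 1)‖ := norm_nonneg _
      have hn : (0:ℝ) ≤ ‖(H (t + 1))⁻¹‖ := norm_nonneg _
      have s1 : ‖(H (t + 1))⁻¹‖ * ‖Xs t - Xs (t + 1)‖ ≤ (1 / α') * ‖Xs t - Xs (t + 1)‖ :=
        mul_le_mul_of_nonneg_right hHinv1 hd
      have s2 : ‖(H (t + 1))⁻¹‖ * ‖Xs t - Xs (t + 1)‖ * ‖(H (t + 1))⁻¹‖ ≤
          (1 / α') * ‖Xs t - Xs (t + 1)‖ * (1 / α') :=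
        mul_le_mul s1 hHinv1 hn (mul_nonneg (one_div_nonneg.mpr hα'.le) hd)
      linarith
    have hPL : ‖P‖ * ‖L t‖ ≤ 1 - γ / 2 := by
      have h1 : ‖P‖ * ‖L t‖ ≤ (1 + γ / 2) * (1 - γ) :=
        mul_le_mul hP hLt (norm_nonneg _) (by linarith)
      nlinarith
    have key : ‖P‖ * ‖L t‖ * ‖G t‖ * ‖L t‖ * ‖P‖ ≤ (1 - γ / 2) ^ 2 * ‖G t‖ := by
      have hg : (0:ℝ) ≤ ‖G t‖ := norm_nonneg _
      have hp : (0:ℝ) ≤ ‖P‖ * ‖L t‖ := mul_nonneg (norm_nonneg _) (norm_nonneg _)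
      have e : ‖P‖ * ‖L t‖ * ‖G t‖ * ‖L t‖ * ‖P‖ = (‖P‖ * ‖L t‖) ^ 2 * ‖G t‖ := by ring
      rw [e]
      exact mul_le_mul_of_nonneg_right (pow_le_pow_left₀ hp hPL 2) hg
    have htri := norm_add_le (P * (L t * G t * (L t)ᵀ) * Pᵀ)
      ((H (t + 1))⁻¹ * (Xs t - Xs (t + 1)) * ((H (t + 1))⁻¹)ᵀ)
    have hrev : ‖Xs t - Xs (t + 1)‖ = ‖Xs (t + 1) - Xs t‖ := norm_sub_rev _ _
    have : (1 / α') * ‖Xs t - Xs (t + 1)‖ * (1 / α') =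
        (1 / α' ^ 2) * ‖Xs (t + 1) - Xs t‖ := by
      rw [hrev]; ring
    linarith
  -- apply aux_rec
  have hGbound := aux_rec (fun t => ‖G t‖) (fun t => ‖Xs (t + 1) - Xs t‖)
    (1 - γ / 2) (1 / α' ^ 2) hGnorm
  intro t ht
  have hGb := hGbound t ht
  -- from G to E
  have hEb : ‖E t‖ ≤ β' ^ 2 * ‖G t‖ := by
    rw [hEG t ht]
    have h1 := tri (H t) (G t) (H t)ᵀ
    rw [hnormT] at h1
    have hg : (0:ℝ) ≤ ‖G t‖ := norm_nonneg _
    have hh : (0:ℝ) ≤ ‖H t‖ := norm_nonneg _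
    have s1 : ‖H t‖ * ‖G t‖ ≤ β' * ‖G t‖ := mul_le_mul_of_nonneg_right (hH t ht) hg
    have s2 : ‖H t‖ * ‖G t‖ * ‖H t‖ ≤ β' * ‖G t‖ * β' :=
      mul_le_mul s1 (hH t ht) hh (mul_nonneg hβ'.le hg)
    have e : β' * ‖G t‖ * β' = β' ^ 2 * ‖G t‖ := by ring
    linarith
  have hG1 : ‖G 1‖ ≤ (1 / α' ^ 2) * ‖E 1‖ := by
    have h1 := tri (H 1)⁻¹ (E 1) ((H 1)⁻¹)ᵀ
    rw [hnormT] at h1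
    have hg : (0:ℝ) ≤ ‖E 1‖ := norm_nonneg _
    have hh : (0:ℝ) ≤ ‖(H 1)⁻¹‖ := norm_nonneg _
    have hb := hHinv 1 (le_refl 1)
    have s1 : ‖(H 1)⁻¹‖ * ‖E 1‖ ≤ (1 / α') * ‖E 1‖ := mul_le_mul_of_nonneg_right hb hg
    have s2 : ‖(H 1)⁻¹‖ * ‖E 1‖ * ‖(H 1)⁻¹‖ ≤ (1 / α') * ‖E 1‖ * (1 / α') :=
      mul_le_mul s1 hb hh (mul_nonneg (one_div_nonneg.mpr hα'.le) hg)
    have e : (1 / α') * ‖E 1‖ * (1 / α') = (1 / α' ^ 2) * ‖E 1‖ := by ring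
    linarith
  -- the sum rewrite
  have hsumeq : ∑ i ∈ Finset.range (t - 1), (1 - γ / 2) ^ (2 * i) * ‖Xs (t - 1 - i + 1) - Xs (t - 1 - i)‖
      = ∑ i ∈ Finset.range (t - 1), (1 - γ / 2) ^ (2 * i) * ‖Xs (t - i) - Xs (t - 1 - i)‖ := by
    refine Finset.sum_congr rfl fun i hi => ?_
    have hi' : i < t - 1 := Finset.mem_range.mp hi
    have : t - 1 - i + 1 = t - i := by omega
    rw [this]
  -- exponential bound
  have hexp : (1 - γ / 2) ^ (2 * (t - 1)) ≤ Real.exp (-((t : ℝ) - 1) * γ) := by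
    have h1 : (1 - γ / 2) ≤ Real.exp (-(γ / 2)) := by
      have := Real.add_one_le_exp (-(γ / 2))
      linarith
    have h2 : (1 - γ / 2) ^ (2 * (t - 1)) ≤ (Real.exp (-(γ / 2))) ^ (2 * (t - 1)) :=
      pow_le_pow_left₀ hr0 h1 _
    have h3 : (Real.exp (-(γ / 2))) ^ (2 * (t - 1)) = Real.exp (-((t : ℝ) - 1) * γ) := by
      rw [← Real.exp_nat_mul]
      congr 1
      have hc : ((2 * (t - 1) : ℕ) : ℝ) = 2 * ((t : ℝ) - 1) := by
        push_cast [Nat.cast_sub ht]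
        ring
      rw [hc]; ring
    linarith
  -- assemble
  have hS0 : (0:ℝ) ≤ ∑ i ∈ Finset.range (t - 1),
      (1 - γ / 2) ^ (2 * i) * ‖Xs (t - i) - Xs (t - 1 - i)‖ :=
    Finset.sum_nonneg fun i _ => mul_nonneg (pow_nonneg hr0 _) (norm_nonneg _)
  have hE1 : (0:ℝ) ≤ ‖E 1‖ := norm_nonneg _
  have hκ2 : κ ^ 2 = β' ^ 2 / α' ^ 2 := by rw [hκdef]; field_simp
  have hfin : ‖E t‖ ≤ (1 - γ / 2) ^ (2 * (t - 1)) * κ ^ 2 * ‖E 1‖ +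
      κ ^ 2 * ∑ i ∈ Finset.range (t - 1),
        (1 - γ / 2) ^ (2 * i) * ‖Xs (t - i) - Xs (t - 1 - i)‖ := by
    have hGb' : ‖G t‖ ≤ (1 - γ / 2) ^ (2 * (t - 1)) * ‖G 1‖ +
        (1 / α' ^ 2) * ∑ i ∈ Finset.range (t - 1),
          (1 - γ / 2) ^ (2 * i) * ‖Xs (t - i) - Xs (t - 1 - i)‖ := by
      have h := hGb
      rw [hsumeq] at h
      exact h
    have step1 : ‖E t‖ ≤ β' ^ 2 * ((1 - γ / 2) ^ (2 * (t - 1)) * ‖G 1‖ +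
        (1 / α' ^ 2) * ∑ i ∈ Finset.range (t - 1),
          (1 - γ / 2) ^ (2 * i) * ‖Xs (t - i) - Xs (t - 1 - i)‖) :=
      le_trans hEb (mul_le_mul_of_nonneg_left hGb' (pow_nonneg hβ'.le 2))
    have step2 : β' ^ 2 * ((1 - γ / 2) ^ (2 * (t - 1)) * ‖G 1‖ +
        (1 / α' ^ 2) * ∑ i ∈ Finset.range (t - 1),
          (1 - γ / 2) ^ (2 * i) * ‖Xs (t - i) - Xs (t - 1 - i)‖)
        = β' ^ 2 * ((1 - γ / 2) ^ (2 * (t - 1)) * ‖G 1‖) +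
          κ ^ 2 * ∑ i ∈ Finset.range (t - 1),
            (1 - γ / 2) ^ (2 * i) * ‖Xs (t - i) - Xs (t - 1 - i)‖ := by
      rw [hκ2]; field_simp
    have step3 : β' ^ 2 * ((1 - γ / 2) ^ (2 * (t - 1)) * ‖G 1‖) ≤
        β' ^ 2 * ((1 - γ / 2) ^ (2 * (t - 1)) * ((1 / α' ^ 2) * ‖E 1‖)) := by
      refine mul_le_mul_of_nonneg_left ?_ (pow_nonneg hβ'.le 2)
      exact mul_le_mul_of_nonneg_left hG1 (pow_nonneg hr0 _)
    have step4 : β' ^ 2 * ((1 - γ / 2) ^ (2 * (t - 1)) * ((1 / α' ^ 2) * ‖E 1‖)) =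
        (1 - γ / 2) ^ (2 * (t - 1)) * κ ^ 2 * ‖E 1‖ := by
      rw [hκ2]; field_simp
    linarith
  have hκ2pos : (0:ℝ) < κ ^ 2 := by positivity
  have hfinal : (1 - γ / 2) ^ (2 * (t - 1)) * κ ^ 2 * ‖E 1‖ ≤
      Real.exp (-((t : ℝ) - 1) * γ) * κ ^ 2 * ‖E 1‖ := by
    have := mul_le_mul_of_nonneg_right (mul_le_mul_of_nonneg_right hexp (le_of_lt hκ2pos)) hE1
    linarith
  show ‖E t‖ ≤ _
  calc ‖E t‖ ≤ (1 - γ / 2) ^ (2 * (t - 1)) * κ ^ 2 * ‖E 1‖ +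
      κ ^ 2 * ∑ i ∈ Finset.range (t - 1),
        (1 - γ / 2) ^ (2 * i) * ‖Xs (t - i) - Xs (t - 1 - i)‖ := hfin
    _ ≤ Real.exp (-((t : ℝ) - 1) * γ) * κ ^ 2 * ‖E 1‖ +
      κ ^ 2 * ∑ i ∈ Finset.range (t - 1),
        (1 - γ / 2) ^ (2 * i) * ‖Xs (t - i) - Xs (t - 1 - i)‖ := by linarith
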